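/- arXiv:2506.08265 — 2 statements merged into one kernel-verified Lean document; each statement's English description precedes it below -/
import Mathlib

section
/- For N ≥ 2, k ∈ {1,...,N-1}, and complex x with |x| < 1, letting ζ_N = e^{2πi/N}: log((x ζ_N^k; x)_∞ / (x ζ_N^{-k}; x)_∞) = -2i ∑_{n≥1} x^n ∑_{d|n} (1/d) sin(2πkd/N), where the divisor sum runs over positive divisors d of n. -/
open Complex Finset

lemma exp_pow_sub_aux (θ : ℝ) (d : ℕ) :
    Complex.exp (-((θ : ℂ) * I)) ^ d - Complex.exp ((θ : ℂ) * I) ^ d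
      = -2 * I * (Real.sin (θ * d) : ℂ) := by
  rw [← Complex.exp_nat_mul, ← Complex.exp_nat_mul]
  have h1 : (d : ℂ) * -((θ : ℂ) * I) = (-(θ * d) : ℝ) * I := by push_cast; ring
  have h2 : (d : ℂ) * ((θ : ℂ) * I) = ((θ * d : ℝ) : ℂ) * I := by push_cast; ring
  rw [h1, h2, Complex.exp_mul_I, Complex.exp_mul_I, Complex.ofReal_neg, Complex.cos_neg,
    Complex.sin_neg, ← Complex.ofReal_sin]
  ring

/-- For `N ≥ 2`, `k ∈ {1,…,N-1}` and `|x| < 1`, with `ζ_N = e^{2πi/N}`: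
`log((x ζ_N^k; x)_∞ / (x ζ_N^{-k}; x)_∞) = -2i ∑_{n≥1} x^n ∑_{d|n} (1/d) sin(2πkd/N)`,
the logarithm being taken termwise over the factors of the infinite products. -/
theorem log_ratio_qPochhammer_root_of_unity (N k : ℕ) (hN : 2 ≤ N)
    (hk : k ∈ Finset.Icc 1 (N - 1)) (x : ℂ) (hx : ‖x‖ < 1) :
    (∑' j : ℕ,
        (Complex.log (1 - Complex.exp (2 * (Real.pi : ℂ) * Complex.I * (k : ℂ) / (N : ℂ))
            * x ^ (j + 1)) -
         Complex.log (1 - Complex.exp (-(2 * (Real.pi : ℂ) * Complex.I * (k : ℂ) / (N : ℂ)))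
            * x ^ (j + 1))))
      = -2 * Complex.I * ∑' n : ℕ+,
          x ^ (n : ℕ) * ∑ d ∈ (n : ℕ).divisors,
            (1 / (d : ℂ)) * (Real.sin (2 * Real.pi * k * d / N) : ℂ) := by
  set θ : ℝ := 2 * Real.pi * k / N with hθ
  have hcθ : 2 * (Real.pi : ℂ) * Complex.I * (k : ℂ) / (N : ℂ) = (θ : ℂ) * I := by
    rw [hθ]; push_cast; ring
  rw [hcθ]
  set ζ : ℂ := Complex.exp ((θ : ℂ) * I) with hζdef
  set ζ' : ℂ := Complex.exp (-((θ : ℂ) * I)) with hζ'def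
  have hζ : ‖ζ‖ = 1 := Complex.norm_exp_ofReal_mul_I θ
  have hζ' : ‖ζ'‖ = 1 := by
    have h := Complex.norm_exp_ofReal_mul_I (-θ)
    rw [Complex.ofReal_neg, neg_mul] at h
    exact h
  set F : ℕ × ℕ → ℂ := fun p =>
    if p.1 = 0 then 0 else ((ζ' * x ^ p.1) ^ p.2 - (ζ * x ^ p.1) ^ p.2) / p.2 with hFdef
  -- summability of F
  have hF : Summable F := by
    rcases eq_or_ne x 0 with rfl | hx0
    · have hz : F = fun _ => 0 := by
        funext p
        obtain ⟨m, ℓ⟩ := p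
        rcases Nat.eq_zero_or_pos m with rfl | hm
        · simp [hFdef]
        rcases Nat.eq_zero_or_pos ℓ with rfl | hl
        · simp [hFdef]
        simp [hFdef, hm.ne', zero_pow hm.ne', zero_pow hl.ne']
      rw [hz]; exact summable_zero
    · set r := ‖x‖ with hr
      have hr0 : 0 < r := by simpa [hr] using norm_pos_iff.mpr hx0
      have hG : Summable (fun p : ℕ × ℕ => (2 / r * r ^ p.1) * r ^ p.2) := by
        have h1 : Summable (fun m : ℕ => 2 / r * r ^ m) :=
          (summable_geometric_of_lt_one hr0.le hx).mul_left _
        have h2 : Summable (fun ℓ : ℕ => r ^ ℓ) := summable_geometric_of_lt_one hr0.le hx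
        exact h1.mul_of_nonneg h2 (fun m => by positivity) (fun ℓ => by positivity)
      refine Summable.of_norm_bounded hG ?_
      rintro ⟨m, ℓ⟩
      rcases Nat.eq_zero_or_pos m with rfl | hm
      · simp only [hFdef, if_pos rfl, norm_zero]
        positivity
      rcases Nat.eq_zero_or_pos ℓ with rfl | hl
      · simp only [hFdef, if_neg hm.ne', pow_zero, sub_self, Nat.cast_zero, div_zero, norm_zero]
        positivity
      simp only [hFdef, if_neg hm.ne']
      have hnum : ‖(ζ' * x ^ m) ^ ℓ - (ζ * x ^ m) ^ ℓ‖ ≤ 2 * r ^ (m * ℓ) := by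
        have e1 : ‖(ζ' * x ^ m) ^ ℓ‖ = r ^ (m * ℓ) := by
          rw [norm_pow, norm_mul, hζ', one_mul,
            norm_pow, ← pow_mul]
        have e2 : ‖(ζ * x ^ m) ^ ℓ‖ = r ^ (m * ℓ) := by
          rw [norm_pow, norm_mul, hζ, one_mul,
            norm_pow, ← pow_mul]
        calc ‖(ζ' * x ^ m) ^ ℓ - (ζ * x ^ m) ^ ℓ‖
            ≤ ‖(ζ' * x ^ m) ^ ℓ‖ + ‖(ζ * x ^ m) ^ ℓ‖ := norm_sub_le _ _
          _ = 2 * r ^ (m * ℓ) := by rw [e1, e2]; ring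
      have hdiv : ‖((ζ' * x ^ m) ^ ℓ - (ζ * x ^ m) ^ ℓ) / (ℓ : ℂ)‖
          ≤ ‖(ζ' * x ^ m) ^ ℓ - (ζ * x ^ m) ^ ℓ‖ := by
        rw [norm_div]
        have h1 : (1 : ℝ) ≤ ‖(ℓ : ℂ)‖ := by
          rw [Complex.norm_natCast]
          exact_mod_cast hl
        exact div_le_self (norm_nonneg _) h1
      have hexp : m + ℓ - 1 ≤ m * ℓ := by
        obtain ⟨a, rfl⟩ := Nat.exists_eq_add_of_le hm
        obtain ⟨b, rfl⟩ := Nat.exists_eq_add_of_le hl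
        have : a * b ≥ 0 := Nat.zero_le _
        calc 1 + a + (1 + b) - 1 = a + b + 1 := by omega
          _ ≤ (1 + a) * (1 + b) := by nlinarith
      have hrpow : r ^ (m * ℓ) ≤ r ^ (m + ℓ - 1) :=
        pow_le_pow_of_le_one hr0.le hx.le hexp
      have hfinal : 2 * r ^ (m + ℓ - 1) = 2 / r * r ^ m * r ^ ℓ := by
        have h1 : m + ℓ - 1 + 1 = m + ℓ := by omega
        have : r ^ (m + ℓ - 1) * r = r ^ (m + ℓ) := by
          rw [← pow_succ, h1]
        field_simp
        rw [this]
        ring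
      calc ‖((ζ' * x ^ m) ^ ℓ - (ζ * x ^ m) ^ ℓ) / (ℓ : ℂ)‖
          ≤ 2 * r ^ (m * ℓ) := hdiv.trans hnum
        _ ≤ 2 * r ^ (m + ℓ - 1) := by nlinarith
        _ = 2 / r * r ^ m * r ^ ℓ := hfinal
  -- rows
  have hrowHS : ∀ m : ℕ, 0 < m → HasSum (fun ℓ => F (m, ℓ))
      (Complex.log (1 - ζ * x ^ m) - Complex.log (1 - ζ' * x ^ m)) := by
    intro m hm
    have hnorm : ∀ (w : ℂ), ‖w‖ = 1 → ‖w * x ^ m‖ < 1 := by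
      intro w hw
      have he : ‖w * x ^ m‖ = ‖x‖ ^ m := by
        rw [norm_mul, hw, one_mul, norm_pow]
      rw [he]
      exact pow_lt_one₀ (norm_nonneg x) hx hm.ne'
    have h1 := Complex.hasSum_taylorSeries_neg_log (hnorm ζ' hζ')
    have h2 := Complex.hasSum_taylorSeries_neg_log (hnorm ζ hζ)
    have h3 : (fun ℓ : ℕ => F (m, ℓ))
        = fun ℓ : ℕ => (ζ' * x ^ m) ^ ℓ / ℓ - (ζ * x ^ m) ^ ℓ / ℓ := by
      funext ℓ
      simp only [hFdef, if_neg hm.ne', sub_div]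
    rw [h3]
    convert h1.sub h2 using 1
    · rfl
    ring
  -- LHS as double sum
  have hT0 : (∑' ℓ : ℕ, F (0, ℓ)) = 0 := by simp [hFdef]
  have hstep1 : (∑' j : ℕ,
      (Complex.log (1 - ζ * x ^ (j + 1)) - Complex.log (1 - ζ' * x ^ (j + 1))))
      = ∑' m : ℕ, ∑' ℓ : ℕ, F (m, ℓ) := by
    have e1 : (∑' j : ℕ,
        (Complex.log (1 - ζ * x ^ (j + 1)) - Complex.log (1 - ζ' * x ^ (j + 1))))
        = ∑' j : ℕ, ∑' ℓ : ℕ, F (j + 1, ℓ) :=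
      tsum_congr fun j => ((hrowHS (j + 1) j.succ_pos).tsum_eq).symm
    rw [e1]
    have hsupp : Function.support (fun m : ℕ => ∑' ℓ : ℕ, F (m, ℓ)) ⊆ Set.range Nat.succ := by
      intro m hm
      rcases Nat.eq_zero_or_pos m with rfl | h
      · exact absurd hT0 hm
      · exact ⟨m - 1, by omega⟩
    exact Function.Injective.tsum_eq Nat.succ_injective hsupp
  -- fiberwise
  have hfibtot : HasSum (fun n : ℕ => ∑' p : (fun p : ℕ × ℕ => p.1 * p.2) ⁻¹' {n}, F p)
      (∑' p : ℕ × ℕ, F p) := hF.hasSum.tsum_fiberwise _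
  have harg : ∀ d : ℕ, θ * d = 2 * Real.pi * k * d / N := by
    intro d; rw [hθ]; ring
  have hkey : ∀ d : ℕ, ζ' ^ d - ζ ^ d = -2 * I * (Real.sin (2 * Real.pi * k * d / N) : ℂ) := by
    intro d
    have h := exp_pow_sub_aux θ d
    rwa [harg d] at h
  have hfiber : ∀ n : ℕ, (∑' p : (fun p : ℕ × ℕ => p.1 * p.2) ⁻¹' {n}, F p)
      = -2 * I * (x ^ n * ∑ d ∈ n.divisors,
          (1 / (d : ℂ)) * (Real.sin (2 * Real.pi * k * d / N) : ℂ)) := by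
    intro n
    rcases eq_or_ne n 0 with rfl | hn
    · have hz : ∀ p : (fun p : ℕ × ℕ => p.1 * p.2) ⁻¹' {(0 : ℕ)}, F p = 0 := by
        rintro ⟨⟨m, ℓ⟩, hp⟩
        have hml : m * ℓ = 0 := hp
        rcases Nat.mul_eq_zero.mp hml with rfl | rfl
        · simp [hFdef]
        · rcases Nat.eq_zero_or_pos m with rfl | hm
          · simp [hFdef]
          · simp [hFdef, hm.ne']
      rw [tsum_congr hz, tsum_zero]
      simp
    · have hset : (fun p : ℕ × ℕ => p.1 * p.2) ⁻¹' {n} = ↑(n.divisorsAntidiagonal) := by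
        ext p
        simp [Nat.mem_divisorsAntidiagonal, hn, eq_comm]
      rw [hset, Finset.tsum_subtype' n.divisorsAntidiagonal F]
      rw [show (∑ p ∈ n.divisorsAntidiagonal, F p)
            = ∑ p ∈ n.divisorsAntidiagonal, (fun a b => F (a, b)) p.1 p.2 from rfl,
        Nat.sum_divisorsAntidiagonal' (f := fun a b => F (a, b))]
      rw [Finset.mul_sum, Finset.mul_sum]
      refine Finset.sum_congr rfl fun d hd => ?_
      obtain ⟨hdvd, hn0⟩ := Nat.mem_divisors.mp hd
      have hdpos : 0 < d := Nat.pos_of_mem_divisors hd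
      have hndpos : 0 < n / d := Nat.div_pos (Nat.le_of_dvd (Nat.pos_of_ne_zero hn) hdvd) hdpos
      simp only [hFdef, if_neg hndpos.ne']
      rw [mul_pow, mul_pow, ← pow_mul, Nat.div_mul_cancel hdvd]
      have key := hkey d
      linear_combination (x ^ n / (d : ℂ)) * key
  have hstep2 : (∑' m : ℕ, ∑' ℓ : ℕ, F (m, ℓ)) = ∑' p : ℕ × ℕ, F p :=
    by exact (Summable.tsum_prod' hF fun m => hF.prod_factor m).symm
  have hstep3 : (∑' p : ℕ × ℕ, F p) = ∑' n : ℕ, -2 * I * (x ^ n * ∑ d ∈ n.divisors,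
      (1 / (d : ℂ)) * (Real.sin (2 * Real.pi * k * d / N) : ℂ)) := by
    rw [← hfibtot.tsum_eq]
    exact tsum_congr hfiber
  have hstep4 : (∑' n : ℕ, -2 * I * (x ^ n * ∑ d ∈ n.divisors,
      (1 / (d : ℂ)) * (Real.sin (2 * Real.pi * k * d / N) : ℂ)))
      = -2 * I * ∑' n : ℕ, (x ^ n * ∑ d ∈ n.divisors,
      (1 / (d : ℂ)) * (Real.sin (2 * Real.pi * k * d / N) : ℂ)) := tsum_mul_left
  have hstep5 : (∑' n : ℕ+, (x ^ (n : ℕ) * ∑ d ∈ (n : ℕ).divisors,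
      (1 / (d : ℂ)) * (Real.sin (2 * Real.pi * k * d / N) : ℂ)))
      = ∑' n : ℕ, (x ^ n * ∑ d ∈ n.divisors,
      (1 / (d : ℂ)) * (Real.sin (2 * Real.pi * k * d / N) : ℂ)) := by
    refine Function.Injective.tsum_eq (g := fun n : ℕ+ => (n : ℕ))
      (f := fun n : ℕ => x ^ n * ∑ d ∈ n.divisors,
        (1 / (d : ℂ)) * (Real.sin (2 * Real.pi * k * d / N) : ℂ))
      (fun a b h => PNat.coe_injective h) ?_
    intro m hm
    rcases Nat.eq_zero_or_pos m with rfl | h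
    · simp at hm
    · exact ⟨⟨m, h⟩, rfl⟩
  rw [hstep1, hstep2, hstep3, hstep4, hstep5]
end

section
/- For every positive integer n and the non-principal character χ_4 modulo 4, the sum ∑_{d|n} χ_4(d)/d over positive divisors d of n is a positive rational number. -/
open Finset ArithmeticFunction

def chiFour (d : ℕ) : ℚ :=
  if d % 4 = 1 then 1 else if d % 4 = 3 then -1 else 0

lemma chiFour_mul (m n : ℕ) : chiFour (m * n) = chiFour m * chiFour n := by
  have hm : m % 4 = 0 ∨ m % 4 = 1 ∨ m % 4 = 2 ∨ m % 4 = 3 := by omega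
  have hn : n % 4 = 0 ∨ n % 4 = 1 ∨ n % 4 = 2 ∨ n % 4 = 3 := by omega
  unfold chiFour
  rcases hm with h1|h1|h1|h1 <;> rcases hn with h2|h2|h2|h2 <;>
    simp [Nat.mul_mod, h1, h2]

lemma chiFour_pow (p i : ℕ) : chiFour (p ^ i) = (chiFour p) ^ i := by
  induction i with
  | zero => simp [chiFour]
  | succ k ih => rw [pow_succ, chiFour_mul, ih, pow_succ]

/-- f as arithmetic function -/
def chiF : ArithmeticFunction ℚ :=
  ⟨fun d => chiFour d / d, by simp [chiFour]⟩

lemma chiF_apply (d : ℕ) : chiF d = chiFour d / d := rfl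

lemma chiF_mult : chiF.IsMultiplicative := by
  constructor
  · simp [chiF_apply, chiFour]
  · intro m n _
    simp only [chiF_apply, chiFour_mul, Nat.cast_mul]
    rw [div_mul_div_comm]

lemma key (p k : ℕ) (hp : p.Prime) :
    0 < ∑ d ∈ (p ^ k).divisors, chiFour d / (d : ℚ) := by
  rw [Nat.sum_divisors_prime_pow hp]
  have hcast : ∀ i : ℕ, (chiFour (p ^ i) : ℚ) / ((p ^ i : ℕ) : ℚ) = (chiFour p / p) ^ i := by
    intro i
    rw [chiFour_pow, Nat.cast_pow, div_pow]
  simp only [hcast]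
  have hp2 : (2 : ℚ) ≤ p := by exact_mod_cast hp.two_le
  have hppos : (0 : ℚ) < p := by linarith
  have hm : p % 4 = 0 ∨ p % 4 = 1 ∨ p % 4 = 2 ∨ p % 4 = 3 := by omega
  rcases hm with h|h|h|h
  · exfalso
    have : 4 ∣ p := Nat.dvd_of_mod_eq_zero h
    rcases (hp.eq_one_or_self_of_dvd 4 this) with h4|h4
    · omega
    · rw [← h4] at hp; norm_num at hp
  · -- chiFour p = 1
    have hc : chiFour p = 1 := by simp [chiFour, h]
    rw [hc]
    apply Finset.sum_pos
    · intro i _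
      positivity
    · exact nonempty_range_add_one
  · -- p = 2
    have hc : chiFour p = 0 := by simp [chiFour, h]
    rw [hc]
    apply Finset.sum_pos'
    · intro i _
      positivity
    · refine ⟨0, Finset.mem_range.2 (Nat.succ_pos k), by norm_num⟩
  · -- chiFour p = -1
    have hc : chiFour p = -1 := by simp [chiFour, h]
    rw [hc]
    set x : ℚ := -1 / p with hx
    have hodd : p ≠ 2 := by rintro rfl; omega
    have hp3 : (3 : ℚ) ≤ p := by
      have := hp.two_le
      have : 3 ≤ p := by omega
      exact_mod_cast this
    have hxlt : |x| < 1 := by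
      rw [hx, abs_div, abs_neg, abs_one, abs_of_pos hppos]
      rw [div_lt_one hppos]; linarith
    have hxne : x ≠ 1 := by
      intro hh; rw [hh] at hxlt; simp at hxlt
    rw [geom_sum_eq hxne]
    apply div_pos_of_neg_of_neg
    · have h1 : x ^ (k + 1) ≤ |x ^ (k + 1)| := le_abs_self _
      have h2 : |x ^ (k + 1)| < 1 := by
        rw [abs_pow]
        exact pow_lt_one₀ (abs_nonneg x) hxlt (Nat.succ_ne_zero k)
      linarith
    · have : x < 0 := by
        rw [hx]
        apply div_neg_of_neg_of_pos <;> [norm_num; exact hppos]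
      linarith

/-- For every positive integer `n`, the divisor sum `∑_{d|n} χ₄(d)/d` is a
positive rational number. -/
theorem chiFour_divisor_sum_pos (n : ℕ) (hn : 0 < n) :
    0 < ∑ d ∈ n.divisors, chiFour d / (d : ℚ) := by
  have hsum : ∀ m : ℕ, ∑ d ∈ m.divisors, chiFour d / (d : ℚ)
      = ((ArithmeticFunction.zeta : ArithmeticFunction ℚ) * chiF) m := by
    intro m
    rw [coe_zeta_mul_apply]
    simp [chiF_apply]
  rw [hsum, (ArithmeticFunction.isMultiplicative_zeta.natCast.mul chiF_mult).multiplicative_factorization _ hn.ne']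
  rw [Finsupp.prod]
  apply Finset.prod_pos
  intro p hp
  have hpp : p.Prime := Nat.prime_of_mem_primeFactors (by simpa using hp)
  rw [← hsum]
  exact key p _ hpp
end
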